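/- If D is a sharp domain and S is a multiplicative subset of D not containing 0, then the localization D_S is a sharp domain. -/

import Mathlib

/-- A domain `R` is *sharp* if whenever `I ⊇ A*B` with `I, A, B` nonzero ideals,
there exist ideals `A' ⊇ A` and `B' ⊇ B` such that `I = A'*B'`. -/
def IsSharpDomain (R : Type*) [CommRing R] : Prop :=
  ∀ I A B : Ideal R, I ≠ ⊥ → A ≠ ⊥ → B ≠ ⊥ → A * B ≤ I →
    ∃ A' B' : Ideal R, A ≤ A' ∧ B ≤ B' ∧ I = A' * B'

theorem sharp_localization (R : Type*) [CommRing R] [IsDomain R]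
    (h : IsSharpDomain R) (S : Submonoid R) (hS : (0 : R) ∉ S) :
    IsDomain (Localization S) ∧ IsSharpDomain (Localization S) := by
  have hle : S ≤ nonZeroDivisors R := le_nonZeroDivisors_of_noZeroDivisors hS
  have hdom : IsDomain (Localization S) :=
    IsLocalization.isDomain_of_le_nonZeroDivisors (S := Localization S) hle
  refine ⟨hdom, ?_⟩
  intro I A B hI hA hB hAB
  set f := algebraMap R (Localization S)
  have mc : ∀ J : Ideal (Localization S), Ideal.map f (Ideal.comap f J) = J := fun J =>
    IsLocalization.map_comap S (Localization S) J
  have hne : ∀ J : Ideal (Localization S), J ≠ ⊥ → Ideal.comap f J ≠ ⊥ := by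
    intro J hJ hc
    apply hJ
    rw [← mc J, hc, Ideal.map_bot]
  have key : Ideal.comap f A * Ideal.comap f B ≤ Ideal.comap f I :=
    le_trans (Ideal.le_comap_mul f) (Ideal.comap_mono hAB)
  obtain ⟨A', B', hA', hB', hI'⟩ :=
    h (Ideal.comap f I) (Ideal.comap f A) (Ideal.comap f B)
      (hne I hI) (hne A hA) (hne B hB) key
  refine ⟨Ideal.map f A', Ideal.map f B', ?_, ?_, ?_⟩
  · rw [← mc A]; exact Ideal.map_mono hA'
  · rw [← mc B]; exact Ideal.map_mono hB'
  · rw [← mc I, hI', Ideal.map_mul]
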